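/- Let m ≥ n, let A ∈ ℝ^{m×n} have full rank n (so its columns a_j are nonzero), and let c ≥ 0. Suppose ΔA ∈ ℝ^{m×n} satisfies |ΔA_{ij}| ≤ c‖a_j‖₂ for all i, j, and that √(mn)·c·κ₂ᴰ(A) < 1. Then for every k with 1 ≤ k ≤ n, |σ_k(A + ΔA) − σ_k(A)| ≤ √(mn)·c·κ₂ᴰ(A)·σ_k(A). -/

import Mathlib

open scoped BigOperators
open Matrix

/-- Euclidean norm of a vector in `ℝ^m`. -/
noncomputable def vecNorm {m : ℕ} (v : Fin m → ℝ) : ℝ :=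
  Real.sqrt (∑ i, v i ^ 2)

/-- The `k`-th largest singular value of a real `m × n` matrix
(`k = 0` gives the largest). -/
noncomputable def sval {m n : ℕ} (A : Matrix (Fin m) (Fin n) ℝ) (k : Fin n) : ℝ :=
  Real.sqrt
    (((Matrix.isHermitian_conjTranspose_mul_self A).eigenvalues ∘
      Tuple.sort (Matrix.isHermitian_conjTranspose_mul_self A).eigenvalues) k.rev)

/-- Spectral norm: the largest singular value. -/
noncomputable def specNorm {m n : ℕ} (A : Matrix (Fin m) (Fin n) ℝ) : ℝ :=
  ⨆ k, sval A k

/-- Smallest singular value. -/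
noncomputable def sMin {m n : ℕ} (A : Matrix (Fin m) (Fin n) ℝ) : ℝ :=
  ⨅ k, sval A k

/-- Frobenius norm. -/
noncomputable def frobNorm {m n : ℕ} (A : Matrix (Fin m) (Fin n) ℝ) : ℝ :=
  Real.sqrt (∑ i, ∑ j, (A i j) ^ 2)

/-- Frobenius norm of the off-diagonal part of a square matrix. -/
noncomputable def offF {n : ℕ} (M : Matrix (Fin n) (Fin n) ℝ) : ℝ :=
  frobNorm (M - Matrix.diagonal (fun i => M i i))

/-- Diagonal matrix of inverse column norms `D(A)`. -/
noncomputable def colScale {m n : ℕ} (A : Matrix (Fin m) (Fin n) ℝ) :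
    Matrix (Fin n) (Fin n) ℝ :=
  Matrix.diagonal (fun j => (vecNorm (fun i => A i j))⁻¹)

/-- Condition number `κ₂(A) = σ_max(A) / σ_min(A)`. -/
noncomputable def kappa2 {m n : ℕ} (A : Matrix (Fin m) (Fin n) ℝ) : ℝ :=
  specNorm A / sMin A

/-- One-sided scaled condition number `κ₂ᴰ(A) = κ₂(A · D(A))`. -/
noncomputable def scaledCond {m n : ℕ} (A : Matrix (Fin m) (Fin n) ℝ) : ℝ :=
  kappa2 (A * colScale A)

/-- Entrywise absolute value of a matrix. -/
def matAbs {m n : ℕ} (A : Matrix (Fin m) (Fin n) ℝ) : Matrix (Fin m) (Fin n) ℝ :=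
  fun i j => |A i j|

/-! ### Auxiliary spectral lemmas -/

namespace SVPAux

variable {n : ℕ}

/-- eigenvalues sorted in nondecreasing order. -/
noncomputable def sortedEig {H : Matrix (Fin n) (Fin n) ℝ} (hH : H.IsHermitian) : Fin n → ℝ :=
  hH.eigenvalues ∘ Tuple.sort hH.eigenvalues

lemma quad_expand {H : Matrix (Fin n) (Fin n) ℝ} (hH : H.IsHermitian) (x : Fin n → ℝ) :
    x ⬝ᵥ (H *ᵥ x) = ∑ j, hH.eigenvalues j * (∑ i, hH.eigenvectorBasis j i * x i)^2 := by
  set U : Matrix (Fin n) (Fin n) ℝ := ↑(hH.eigenvectorUnitary) with hU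
  have hUs : star U = Uᵀ := by
    ext i j; simp [Matrix.star_apply]
  have hdiag : Matrix.diagonal (RCLike.ofReal ∘ hH.eigenvalues)
      = Matrix.diagonal hH.eigenvalues := by
    ext i j; simp [Matrix.diagonal]
  conv_lhs => rw [hH.spectral_theorem]
  rw [hdiag, Unitary.conjStarAlgAut_apply, ← hU, hUs]
  rw [← Matrix.mulVec_mulVec, ← Matrix.mulVec_mulVec]
  rw [Matrix.dotProduct_mulVec x U, ← Matrix.mulVec_transpose]
  simp only [Matrix.mulVec, Matrix.diagonal, dotProduct, Matrix.of_apply,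
    Matrix.transpose_apply, ite_mul, zero_mul, Finset.sum_ite_eq, Finset.mem_univ, if_pos]
  refine Finset.sum_congr rfl fun j _ => ?_
  have hb : ∀ i, U i j = hH.eigenvectorBasis j i := fun i => rfl
  simp only [hb]
  ring

lemma normsq_expand {H : Matrix (Fin n) (Fin n) ℝ} (hH : H.IsHermitian) (x : Fin n → ℝ) :
    ∑ i, x i ^ 2 = ∑ j, (∑ i, hH.eigenvectorBasis j i * x i)^2 := by
  set U : Matrix (Fin n) (Fin n) ℝ := ↑(hH.eigenvectorUnitary) with hU
  have hUs : star U = Uᵀ := by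
    ext i j; simp [Matrix.star_apply]
  have h1 : U * Uᵀ = 1 := by
    rw [← hUs]; exact (Matrix.mem_unitaryGroup_iff).mp hH.eigenvectorUnitary.2
  have key : x ⬝ᵥ ((U * Uᵀ) *ᵥ x) = ∑ j, (∑ i, hH.eigenvectorBasis j i * x i)^2 := by
    rw [← Matrix.mulVec_mulVec, Matrix.dotProduct_mulVec x U, ← Matrix.mulVec_transpose]
    simp only [Matrix.mulVec, dotProduct, Matrix.transpose_apply]
    refine Finset.sum_congr rfl fun j _ => ?_
    have hb : ∀ i, U i j = hH.eigenvectorBasis j i := fun i => rfl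
    simp only [hb]
    ring
  rw [← key, h1, Matrix.one_mulVec]
  simp [dotProduct, pow_two]

lemma inner_eq (u v : EuclideanSpace ℝ (Fin n)) : (inner ℝ u v : ℝ) = ∑ i, u i * v i := by
  simp [PiLp.inner_apply, RCLike.inner_apply, conj_trivial, mul_comm]

lemma coeff_vanish (v : Fin n → EuclideanSpace ℝ (Fin n)) (hv : Orthonormal ℝ v)
    (S : Set (Fin n)) (x : EuclideanSpace ℝ (Fin n))
    (hx : x ∈ Submodule.span ℝ (v '' S)) {j : Fin n} (hj : j ∉ S) :
    (inner ℝ (v j) x : ℝ) = 0 := by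
  have hle : Submodule.span ℝ (v '' S) ≤ LinearMap.ker (innerSL ℝ (v j)).toLinearMap := by
    rw [Submodule.span_le]
    rintro y ⟨i, hi, rfl⟩
    have hij : j ≠ i := fun h => hj (h ▸ hi)
    simpa using hv.2 hij
  simpa using hle hx

lemma dim_span (v : Fin n → EuclideanSpace ℝ (Fin n)) (hv : Orthonormal ℝ v)
    (S : Finset (Fin n)) :
    Module.finrank ℝ (Submodule.span ℝ (v '' ↑S)) = S.card := by
  have hli := (hv.linearIndependent).comp (Subtype.val : {i // i ∈ S} → Fin n)
    Subtype.val_injective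
  have hr : Set.range (v ∘ (Subtype.val : {i // i ∈ S} → Fin n)) = v '' ↑S := by
    rw [Set.range_comp]; congr 1; ext i; simp
  rw [← hr, finrank_span_eq_card hli, Fintype.card_coe]

lemma quad_upper {H : Matrix (Fin n) (Fin n) ℝ} (hH : H.IsHermitian) (k : Fin n)
    (x : EuclideanSpace ℝ (Fin n))
    (hx : x ∈ Submodule.span ℝ
      ((fun j => hH.eigenvectorBasis (Tuple.sort hH.eigenvalues j)) '' ↑(Finset.Iic k))) :
    x ⬝ᵥ (H *ᵥ x) ≤ sortedEig hH k * ∑ i, x i ^ 2 := by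
  set σ := Tuple.sort hH.eigenvalues with hσ
  set w : Fin n → EuclideanSpace ℝ (Fin n) := fun j => hH.eigenvectorBasis (σ j) with hw
  have hwo : Orthonormal ℝ w := hH.eigenvectorBasis.orthonormal.comp σ σ.injective
  set d : Fin n → ℝ := fun j => ∑ i, w j i * x i with hd
  have hQ : x ⬝ᵥ (H *ᵥ x) = ∑ j, sortedEig hH j * d j ^ 2 := by
    rw [quad_expand hH x,
      ← Equiv.sum_comp σ (fun j => hH.eigenvalues j * (∑ i, hH.eigenvectorBasis j i * x i)^2)]
    rfl
  have hN : ∑ i, x i ^ 2 = ∑ j, d j ^ 2 := by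
    rw [normsq_expand hH x,
      ← Equiv.sum_comp σ (fun j => (∑ i, hH.eigenvectorBasis j i * x i)^2)]
  have hd0 : ∀ j, ¬ j ≤ k → d j = 0 := by
    intro j hj
    have h := coeff_vanish w hwo _ x hx (by simpa using hj)
    rw [inner_eq] at h
    exact h
  rw [hQ, hN, Finset.mul_sum]
  refine Finset.sum_le_sum fun j _ => ?_
  by_cases hj : j ≤ k
  · exact mul_le_mul_of_nonneg_right (Tuple.monotone_sort hH.eigenvalues hj) (sq_nonneg _)
  · rw [hd0 j hj]; simp

lemma quad_lower {H : Matrix (Fin n) (Fin n) ℝ} (hH : H.IsHermitian) (k : Fin n)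
    (x : EuclideanSpace ℝ (Fin n))
    (hx : x ∈ Submodule.span ℝ
      ((fun j => hH.eigenvectorBasis (Tuple.sort hH.eigenvalues j)) '' ↑(Finset.Ici k))) :
    sortedEig hH k * ∑ i, x i ^ 2 ≤ x ⬝ᵥ (H *ᵥ x) := by
  set σ := Tuple.sort hH.eigenvalues with hσ
  set w : Fin n → EuclideanSpace ℝ (Fin n) := fun j => hH.eigenvectorBasis (σ j) with hw
  have hwo : Orthonormal ℝ w := hH.eigenvectorBasis.orthonormal.comp σ σ.injective
  set d : Fin n → ℝ := fun j => ∑ i, w j i * x i with hd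
  have hQ : x ⬝ᵥ (H *ᵥ x) = ∑ j, sortedEig hH j * d j ^ 2 := by
    rw [quad_expand hH x,
      ← Equiv.sum_comp σ (fun j => hH.eigenvalues j * (∑ i, hH.eigenvectorBasis j i * x i)^2)]
    rfl
  have hN : ∑ i, x i ^ 2 = ∑ j, d j ^ 2 := by
    rw [normsq_expand hH x,
      ← Equiv.sum_comp σ (fun j => (∑ i, hH.eigenvectorBasis j i * x i)^2)]
  have hd0 : ∀ j, ¬ k ≤ j → d j = 0 := by
    intro j hj
    have h := coeff_vanish w hwo _ x hx (by simpa using hj)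
    rw [inner_eq] at h
    exact h
  rw [hQ, hN, Finset.mul_sum]
  refine Finset.sum_le_sum fun j _ => ?_
  by_cases hj : k ≤ j
  · exact mul_le_mul_of_nonneg_right (Tuple.monotone_sort hH.eigenvalues hj) (sq_nonneg _)
  · rw [hd0 j hj]; simp

/-- Relative Weyl-type comparison of sorted eigenvalues. -/
lemma sortedEig_le_mul {H K : Matrix (Fin n) (Fin n) ℝ} (hH : H.IsHermitian)
    (hK : K.IsHermitian) {c : ℝ} (hc : 0 ≤ c)
    (hQ : ∀ x : Fin n → ℝ, x ⬝ᵥ (K *ᵥ x) ≤ c * (x ⬝ᵥ (H *ᵥ x))) (k : Fin n) :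
    sortedEig hK k ≤ c * sortedEig hH k := by
  set VH := Submodule.span ℝ
    ((fun j => hH.eigenvectorBasis (Tuple.sort hH.eigenvalues j)) '' ↑(Finset.Iic k)) with hVH
  set VK := Submodule.span ℝ
    ((fun j => hK.eigenvectorBasis (Tuple.sort hK.eigenvalues j)) '' ↑(Finset.Ici k)) with hVK
  have dH : Module.finrank ℝ VH = (k : ℕ) + 1 := by
    rw [hVH, dim_span (fun j => hH.eigenvectorBasis (Tuple.sort hH.eigenvalues j))
      (hH.eigenvectorBasis.orthonormal.comp _ (Tuple.sort hH.eigenvalues).injective)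
      (Finset.Iic k), Fin.card_Iic]
  have dK : Module.finrank ℝ VK = n - (k : ℕ) := by
    rw [hVK, dim_span (fun j => hK.eigenvectorBasis (Tuple.sort hK.eigenvalues j))
      (hK.eigenvectorBasis.orthonormal.comp _ (Tuple.sort hK.eigenvalues).injective)
      (Finset.Ici k), Fin.card_Ici]
  have hsum := Submodule.finrank_sup_add_finrank_inf_eq VH VK
  have hle : Module.finrank ℝ ↥(VH ⊔ VK) ≤ n := by
    refine le_trans (Submodule.finrank_le _) ?_
    simp [finrank_euclideanSpace]
  have hpos : 0 < Module.finrank ℝ ↥(VH ⊓ VK) := by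
    have := k.isLt
    omega
  obtain ⟨⟨x, hxI⟩, hx0'⟩ := Module.finrank_pos_iff_exists_ne_zero.mp hpos
  have hx0 : x ≠ 0 := by simpa [Submodule.mk_eq_zero] using hx0'
  have hN : 0 < ∑ i, x i ^ 2 := by
    have hex : ∃ i, x i ≠ 0 := by
      by_contra h
      push_neg at h
      exact hx0 (by ext i; simpa using h i)
    obtain ⟨i, hi⟩ := hex
    have h1 : (0:ℝ) < x i ^ 2 := by positivity
    have h2 : x i ^ 2 ≤ ∑ i, x i ^ 2 :=
      Finset.single_le_sum (fun j _ => sq_nonneg (x j)) (Finset.mem_univ i)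
    linarith
  have h1 := quad_lower hK k x hxI.2
  have h2 := quad_upper hH k x hxI.1
  have h3 := hQ x
  have key : sortedEig hK k * ∑ i, x i ^ 2 ≤ (c * sortedEig hH k) * ∑ i, x i ^ 2 := by
    calc sortedEig hK k * ∑ i, x i ^ 2 ≤ x ⬝ᵥ (K *ᵥ x) := h1
    _ ≤ c * (x ⬝ᵥ (H *ᵥ x)) := h3
    _ ≤ c * (sortedEig hH k * ∑ i, x i ^ 2) := mul_le_mul_of_nonneg_left h2 hc
    _ = (c * sortedEig hH k) * ∑ i, x i ^ 2 := by ring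
  exact le_of_mul_le_mul_right key hN

variable {m : ℕ}

lemma conjT_eq (A : Matrix (Fin m) (Fin n) ℝ) : Aᴴ = Aᵀ := by
  ext i j; simp [Matrix.conjTranspose_apply]

lemma quad_tmul (A : Matrix (Fin m) (Fin n) ℝ) (x : Fin n → ℝ) :
    x ⬝ᵥ ((Aᴴ * A) *ᵥ x) = ∑ i, ((A *ᵥ x) i)^2 := by
  rw [conjT_eq, ← Matrix.mulVec_mulVec, Matrix.dotProduct_mulVec, Matrix.vecMul_transpose]
  simp [dotProduct, pow_two]

lemma eig_tmul_nonneg (A : Matrix (Fin m) (Fin n) ℝ) (i : Fin n) :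
    0 ≤ (Matrix.isHermitian_conjTranspose_mul_self A).eigenvalues i := by
  exact (Matrix.posSemidef_conjTranspose_mul_self A).eigenvalues_nonneg i

lemma eig_tmul_pos (A : Matrix (Fin m) (Fin n) ℝ) (h : A.rank = n) (i : Fin n) :
    0 < (Matrix.isHermitian_conjTranspose_mul_self A).eigenvalues i := by
  rcases lt_or_eq_of_le (eig_tmul_nonneg A i) with h' | h'
  · exact h'
  · exfalso
    have h1 : (Aᴴ * A).rank = n := by rw [conjT_eq, Matrix.rank_transpose_mul_self, h]
    have h2 := (Matrix.isHermitian_conjTranspose_mul_self A).rank_eq_card_non_zero_eigs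
    rw [h1] at h2
    have h3 : Fintype.card {j // (Matrix.isHermitian_conjTranspose_mul_self A).eigenvalues j ≠ 0}
        < Fintype.card (Fin n) := Fintype.card_subtype_lt (x := i) (by simpa using h'.symm)
    rw [Fintype.card_fin] at h3
    omega

lemma quad_tmul_pos (A : Matrix (Fin m) (Fin n) ℝ) (h : A.rank = n)
    (x : Fin n → ℝ) (hx : x ≠ 0) : 0 < ∑ i, ((A *ᵥ x) i)^2 := by
  rw [← quad_tmul, quad_expand (Matrix.isHermitian_conjTranspose_mul_self A) x]
  have hex : ∃ l, (∑ i, (Matrix.isHermitian_conjTranspose_mul_self A).eigenvectorBasis l i * x i) ≠ 0 := by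
    by_contra hcon
    push_neg at hcon
    have hN := normsq_expand (Matrix.isHermitian_conjTranspose_mul_self A) x
    have hsum0 : ∑ i, x i ^ 2 = 0 := by
      rw [hN]; exact Finset.sum_eq_zero fun l _ => by rw [hcon l]; ring
    obtain ⟨i, hi⟩ := Function.ne_iff.mp hx
    have hi' : x i ≠ 0 := by simpa using hi
    have h2 : x i ^ 2 ≤ ∑ i, x i ^ 2 :=
      Finset.single_le_sum (fun j _ => sq_nonneg (x j)) (Finset.mem_univ i)
    have h3 : (0:ℝ) < x i ^ 2 := by positivity
    linarith
  obtain ⟨l, hl⟩ := hex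
  refine Finset.sum_pos' (fun j _ => mul_nonneg (eig_tmul_nonneg A j) (sq_nonneg _))
    ⟨l, Finset.mem_univ l, mul_pos (eig_tmul_pos A h l) (by positivity)⟩


lemma sval_eq (A : Matrix (Fin m) (Fin n) ℝ) (k : Fin n) :
    sval A k = Real.sqrt (sortedEig (Matrix.isHermitian_conjTranspose_mul_self A) k.rev) := rfl

lemma sval_nonneg (A : Matrix (Fin m) (Fin n) ℝ) (k : Fin n) : 0 ≤ sval A k :=
  Real.sqrt_nonneg _

lemma sortedEig_tmul_nonneg (A : Matrix (Fin m) (Fin n) ℝ) (k : Fin n) :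
    0 ≤ sortedEig (Matrix.isHermitian_conjTranspose_mul_self A) k :=
  eig_tmul_nonneg A _

lemma sq_sval (A : Matrix (Fin m) (Fin n) ℝ) (k : Fin n) :
    sval A k ^ 2 = sortedEig (Matrix.isHermitian_conjTranspose_mul_self A) k.rev :=
  Real.sq_sqrt (sortedEig_tmul_nonneg A _)

lemma sqrt_eig_eq_sval (A : Matrix (Fin m) (Fin n) ℝ) (l : Fin n) :
    Real.sqrt ((Matrix.isHermitian_conjTranspose_mul_self A).eigenvalues l)
      = sval A (((Tuple.sort (Matrix.isHermitian_conjTranspose_mul_self A).eigenvalues).symm l).rev) := by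
  rw [sval_eq, Fin.rev_rev]
  simp [sortedEig]

lemma sMin_le_sval (A : Matrix (Fin m) (Fin n) ℝ) (k : Fin n) : sMin A ≤ sval A k :=
  ciInf_le (Set.Finite.bddBelow (Set.finite_range _)) k

lemma sval_le_specNorm (A : Matrix (Fin m) (Fin n) ℝ) (k : Fin n) : sval A k ≤ specNorm A :=
  le_ciSup (Set.Finite.bddAbove (Set.finite_range _)) k

lemma sMin_nonneg (A : Matrix (Fin m) (Fin n) ℝ) (k : Fin n) : 0 ≤ sMin A := by
  haveI : Nonempty (Fin n) := ⟨k⟩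
  exact le_ciInf (fun j => sval_nonneg A j)

lemma eig_ge_sMin_sq (A : Matrix (Fin m) (Fin n) ℝ) (l : Fin n) :
    sMin A ^ 2 ≤ (Matrix.isHermitian_conjTranspose_mul_self A).eigenvalues l := by
  have h0 : 0 ≤ sMin A := sMin_nonneg A l
  have h1 := sMin_le_sval A
    (((Tuple.sort (Matrix.isHermitian_conjTranspose_mul_self A).eigenvalues).symm l).rev)
  calc sMin A ^ 2 ≤ sval A (((Tuple.sort
        (Matrix.isHermitian_conjTranspose_mul_self A).eigenvalues).symm l).rev) ^ 2 :=
      pow_le_pow_left₀ h0 h1 2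
  _ = (Matrix.isHermitian_conjTranspose_mul_self A).eigenvalues l := by
      rw [← sqrt_eig_eq_sval, Real.sq_sqrt (eig_tmul_nonneg A l)]

lemma eig_le_specNorm_sq (A : Matrix (Fin m) (Fin n) ℝ) (l : Fin n) :
    (Matrix.isHermitian_conjTranspose_mul_self A).eigenvalues l ≤ specNorm A ^ 2 := by
  have h1 := sval_le_specNorm A
    (((Tuple.sort (Matrix.isHermitian_conjTranspose_mul_self A).eigenvalues).symm l).rev)
  calc (Matrix.isHermitian_conjTranspose_mul_self A).eigenvalues l
      = sval A (((Tuple.sort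
        (Matrix.isHermitian_conjTranspose_mul_self A).eigenvalues).symm l).rev) ^ 2 := by
        rw [← sqrt_eig_eq_sval, Real.sq_sqrt (eig_tmul_nonneg A l)]
  _ ≤ specNorm A ^ 2 := pow_le_pow_left₀ (sval_nonneg A _) h1 2

lemma mulVec_sq_lower (A : Matrix (Fin m) (Fin n) ℝ) (y : Fin n → ℝ) :
    sMin A ^ 2 * ∑ j, y j ^ 2 ≤ ∑ i, ((A *ᵥ y) i)^2 := by
  rw [← quad_tmul, quad_expand (Matrix.isHermitian_conjTranspose_mul_self A) y,
    normsq_expand (Matrix.isHermitian_conjTranspose_mul_self A) y, Finset.mul_sum]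
  exact Finset.sum_le_sum fun l _ =>
    mul_le_mul_of_nonneg_right (eig_ge_sMin_sq A l) (sq_nonneg _)

lemma mulVec_sq_upper (A : Matrix (Fin m) (Fin n) ℝ) (y : Fin n → ℝ) :
    ∑ i, ((A *ᵥ y) i)^2 ≤ specNorm A ^ 2 * ∑ j, y j ^ 2 := by
  rw [← quad_tmul, quad_expand (Matrix.isHermitian_conjTranspose_mul_self A) y,
    normsq_expand (Matrix.isHermitian_conjTranspose_mul_self A) y, Finset.mul_sum]
  exact Finset.sum_le_sum fun l _ =>
    mul_le_mul_of_nonneg_right (eig_le_specNorm_sq A l) (sq_nonneg _)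

lemma frob_mulVec (M : Matrix (Fin m) (Fin n) ℝ) (y : Fin n → ℝ) :
    ∑ i, ((M *ᵥ y) i)^2 ≤ (∑ i, ∑ j, (M i j)^2) * ∑ j, y j ^ 2 := by
  calc ∑ i, ((M *ᵥ y) i)^2 ≤ ∑ i, ((∑ j, (M i j)^2) * ∑ j, y j ^ 2) := by
        refine Finset.sum_le_sum fun i _ => ?_
        have h := Finset.sum_mul_sq_le_sq_mul_sq Finset.univ (fun j => M i j) y
        simpa [Matrix.mulVec, dotProduct] using h
  _ = (∑ i, ∑ j, (M i j)^2) * ∑ j, y j ^ 2 := by rw [Finset.sum_mul]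

lemma vecNorm_eq_norm (v : Fin m → ℝ) :
    vecNorm v = ‖(WithLp.equiv 2 (Fin m → ℝ)).symm v‖ := by
  rw [EuclideanSpace.norm_eq]
  simp [vecNorm, Real.norm_eq_abs, sq_abs]

lemma vecNorm_add_le (u v : Fin m → ℝ) : vecNorm (u + v) ≤ vecNorm u + vecNorm v := by
  rw [vecNorm_eq_norm, vecNorm_eq_norm, vecNorm_eq_norm]
  have h := norm_add_le ((WithLp.equiv 2 (Fin m → ℝ)).symm u)
    ((WithLp.equiv 2 (Fin m → ℝ)).symm v)
  simpa using h

lemma vecNorm_nonneg (v : Fin m → ℝ) : 0 ≤ vecNorm v := Real.sqrt_nonneg _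

lemma sq_vecNorm (v : Fin m → ℝ) : vecNorm v ^ 2 = ∑ i, v i ^ 2 :=
  Real.sq_sqrt (Finset.sum_nonneg fun i _ => sq_nonneg _)

end SVPAux

set_option maxHeartbeats 2000000 in
open SVPAux in
/-- Relative perturbation of singular values under columnwise-small
perturbations (consequence of Demmel–Veselić Theorem 2.14). -/
theorem singular_value_relative_perturbation
    {m n : ℕ} (hmn : n ≤ m)
    (A : Matrix (Fin m) (Fin n) ℝ) (hrank : A.rank = n)
    (c : ℝ) (hc : 0 ≤ c)
    (ΔA : Matrix (Fin m) (Fin n) ℝ)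
    (hΔ : ∀ i j, |ΔA i j| ≤ c * vecNorm (fun i => A i j))
    (hsmall : Real.sqrt ((m : ℝ) * n) * c * scaledCond A < 1) :
    ∀ k : Fin n, |sval (A + ΔA) k - sval A k| ≤
      Real.sqrt ((m : ℝ) * n) * c * scaledCond A * sval A k := by
  intro k
  haveI : Nonempty (Fin n) := ⟨k⟩
  set X := A * colScale A with hX
  set η := Real.sqrt ((m : ℝ) * n) * c * scaledCond A with hη
  set B := A + ΔA with hB
  -- columns of A are nonzero
  have hcol : ∀ j, 0 < ∑ i, (A i j)^2 := by
    intro j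
    have hsne : (Pi.single j 1 : Fin n → ℝ) ≠ 0 := by
      intro h
      have := congrFun h j
      simp at this
    have hq := quad_tmul_pos A hrank (Pi.single j 1 : Fin n → ℝ) hsne
    have hAe : (A *ᵥ (Pi.single j 1 : Fin n → ℝ)) = fun i => A i j := by
      funext i; simp [Matrix.mulVec_single]
    rwa [hAe] at hq
  have hvn : ∀ j, 0 < vecNorm (fun i => A i j) := fun j => Real.sqrt_pos.mpr (hcol j)
  -- rank of X
  have hdet : IsUnit (colScale A).det := by
    rw [colScale, Matrix.det_diagonal]
    exact (Finset.prod_ne_zero_iff.mpr fun j _ => inv_ne_zero (hvn j).ne').isUnit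
  have hXrank : X.rank = n := by
    rw [hX, Matrix.rank_mul_eq_left_of_isUnit_det (colScale A) A hdet, hrank]
  have hXeigpos := eig_tmul_pos X hXrank
  have hsvalpos : ∀ j, 0 < sval X j := by
    intro j
    rw [sval_eq]
    exact Real.sqrt_pos.mpr (hXeigpos _)
  have hsMinpos : 0 < sMin X := by
    obtain ⟨k0, -, hk0⟩ := Finset.exists_min_image Finset.univ (sval X) ⟨k, Finset.mem_univ k⟩
    have heq : sMin X = sval X k0 := le_antisymm (sMin_le_sval X k0)
      (le_ciInf fun j => hk0 j (Finset.mem_univ j))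
    rw [heq]; exact hsvalpos k0
  -- unit columns of X and specNorm X ≥ 1
  have hXe : ∀ i j, X i j = A i j * (vecNorm (fun i => A i j))⁻¹ := by
    intro i j; rw [hX, colScale, Matrix.mul_diagonal]
  have hXcol : ∀ j, ∑ i, (X i j)^2 = 1 := by
    intro j
    have hv2 : vecNorm (fun i => A i j) ^ 2 = ∑ i, (A i j)^2 := sq_vecNorm _
    have hstep : ∑ i, (X i j)^2 = (vecNorm (fun i => A i j))⁻¹ ^ 2 * ∑ i, (A i j)^2 := by
      rw [Finset.mul_sum]
      refine Finset.sum_congr rfl fun i _ => ?_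
      rw [hXe i j]; ring
    rw [hstep, ← hv2, inv_pow]
    exact inv_mul_cancel₀ (pow_ne_zero 2 (hvn j).ne')
  have hspec0 : 0 ≤ specNorm X := le_trans (sval_nonneg X k) (sval_le_specNorm X k)
  have hspec1 : 1 ≤ specNorm X := by
    have hXe2 : (X *ᵥ (Pi.single k 1 : Fin n → ℝ)) = fun i => X i k := by
      funext i; simp [Matrix.mulVec_single]
    have h := mulVec_sq_upper X (Pi.single k 1 : Fin n → ℝ)
    rw [hXe2] at h
    have hsing : ∑ j, ((Pi.single k 1 : Fin n → ℝ) j)^2 = 1 := by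
      simp [Pi.single_apply]
    simp only [hXcol k] at h
    rw [hsing, mul_one] at h
    nlinarith
  have hsc : scaledCond A = specNorm X / sMin X := rfl
  have hη0 : 0 ≤ η := by
    rw [hη, hsc]
    exact mul_nonneg (mul_nonneg (Real.sqrt_nonneg _) hc) (div_nonneg hspec0 hsMinpos.le)
  have hη1 : η < 1 := hsmall
  -- key relative bound  ‖ΔA x‖ ≤ η ‖A x‖
  have hkey : ∀ x : Fin n → ℝ, vecNorm (ΔA *ᵥ x) ≤ η * vecNorm (A *ᵥ x) := by
    intro x
    set y : Fin n → ℝ := fun j => vecNorm (fun i => A i j) * x j with hy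
    have hxy : x = (colScale A) *ᵥ y := by
      funext j
      rw [colScale, Matrix.mulVec_diagonal, hy]
      rw [inv_mul_cancel_left₀ (hvn j).ne']
    have hAx : A *ᵥ x = X *ᵥ y := by
      rw [hX, ← Matrix.mulVec_mulVec, ← hxy]
    have hΔx : ΔA *ᵥ x = (ΔA * colScale A) *ᵥ y := by
      rw [← Matrix.mulVec_mulVec, ← hxy]
    have hentry : ∀ i j, ((ΔA * colScale A) i j)^2 ≤ c^2 := by
      intro i j
      rw [colScale, Matrix.mul_diagonal]
      have h1 : |ΔA i j| * (vecNorm (fun i => A i j))⁻¹ ≤ c := by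
        calc |ΔA i j| * (vecNorm (fun i => A i j))⁻¹
            ≤ (c * vecNorm (fun i => A i j)) * (vecNorm (fun i => A i j))⁻¹ :=
              mul_le_mul_of_nonneg_right (hΔ i j) (inv_nonneg.mpr (hvn j).le)
        _ = c := by
          rw [mul_assoc, mul_inv_cancel₀ (hvn j).ne', mul_one]
      calc (ΔA i j * (vecNorm (fun i => A i j))⁻¹)^2
          = (|ΔA i j| * (vecNorm (fun i => A i j))⁻¹)^2 := by
            rw [mul_pow, mul_pow, sq_abs]
      _ ≤ c^2 := by
          exact pow_le_pow_left₀ (mul_nonneg (abs_nonneg _) (inv_nonneg.mpr (hvn j).le)) h1 2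
    have hfro : ∑ i, ∑ j, ((ΔA * colScale A) i j)^2 ≤ (m : ℝ) * n * c^2 := by
      calc ∑ i, ∑ j, ((ΔA * colScale A) i j)^2
          ≤ ∑ _i : Fin m, ∑ _j : Fin n, c^2 :=
            Finset.sum_le_sum fun i _ => Finset.sum_le_sum fun j _ => hentry i j
      _ = (m : ℝ) * n * c^2 := by
          simp [Finset.sum_const, Finset.card_univ]
          ring
    have hyn : 0 ≤ ∑ j, y j ^ 2 := Finset.sum_nonneg fun j _ => sq_nonneg _
    have h1 : ∑ i, ((ΔA *ᵥ x) i)^2 ≤ (m : ℝ) * n * c^2 * ∑ j, y j ^ 2 := by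
      rw [hΔx]
      calc ∑ i, (((ΔA * colScale A) *ᵥ y) i)^2
          ≤ (∑ i, ∑ j, ((ΔA * colScale A) i j)^2) * ∑ j, y j ^ 2 := frob_mulVec _ y
      _ ≤ (m : ℝ) * n * c^2 * ∑ j, y j ^ 2 := mul_le_mul_of_nonneg_right hfro hyn
    have h2 : sMin X ^ 2 * ∑ j, y j ^ 2 ≤ ∑ i, ((A *ᵥ x) i)^2 := by
      rw [hAx]; exact mulVec_sq_lower X y
    have hη2 : η^2 = ((m:ℝ)*n) * c^2 * (specNorm X^2 / sMin X^2) := by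
      rw [hη, hsc, mul_pow, mul_pow, Real.sq_sqrt (by positivity)]
      ring
    have hspec2 : 1 ≤ specNorm X ^ 2 := by nlinarith
    have base : 0 ≤ (m:ℝ)*n*c^2 * ∑ j, y j ^ 2 := by positivity
    have hΔnorm : vecNorm (ΔA *ᵥ x) ^ 2 ≤ η^2 * vecNorm (A *ᵥ x) ^ 2 := by
      rw [sq_vecNorm, sq_vecNorm]
      calc ∑ i, ((ΔA *ᵥ x) i)^2 ≤ (m : ℝ) * n * c^2 * ∑ j, y j ^ 2 := h1
      _ ≤ (m : ℝ) * n * c^2 * specNorm X ^ 2 * ∑ j, y j ^ 2 := by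
          nlinarith [mul_le_mul_of_nonneg_left hspec2 base]
      _ = η^2 * (sMin X ^ 2 * ∑ j, y j ^ 2) := by
          rw [hη2]
          field_simp
      _ ≤ η^2 * ∑ i, ((A *ᵥ x) i)^2 := mul_le_mul_of_nonneg_left h2 (sq_nonneg η)
    have hs := Real.sqrt_le_sqrt hΔnorm
    rw [Real.sqrt_sq (vecNorm_nonneg _), Real.sqrt_mul (sq_nonneg η),
      Real.sqrt_sq hη0, Real.sqrt_sq (vecNorm_nonneg _)] at hs
    exact hs
  -- triangle inequalities
  have htriag1 : ∀ x : Fin n → ℝ, vecNorm (B *ᵥ x) ≤ (1+η) * vecNorm (A *ᵥ x) := by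
    intro x
    have hBx : B *ᵥ x = A *ᵥ x + ΔA *ᵥ x := by rw [hB, Matrix.add_mulVec]
    rw [hBx]
    calc vecNorm (A *ᵥ x + ΔA *ᵥ x) ≤ vecNorm (A *ᵥ x) + vecNorm (ΔA *ᵥ x) :=
        vecNorm_add_le _ _
    _ ≤ vecNorm (A *ᵥ x) + η * vecNorm (A *ᵥ x) := by linarith [hkey x]
    _ = (1+η) * vecNorm (A *ᵥ x) := by ring
  have htriag2 : ∀ x : Fin n → ℝ, (1-η) * vecNorm (A *ᵥ x) ≤ vecNorm (B *ᵥ x) := by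
    intro x
    have hAx : A *ᵥ x = B *ᵥ x + (-(ΔA *ᵥ x)) := by
      rw [hB, Matrix.add_mulVec]
      abel
    have hneg : vecNorm (-(ΔA *ᵥ x)) = vecNorm (ΔA *ᵥ x) := by
      simp [vecNorm]
    have h := vecNorm_add_le (B *ᵥ x) (-(ΔA *ᵥ x))
    rw [hneg, ← hAx] at h
    linarith [hkey x]
  -- quadratic form comparisons
  have hQ1 : ∀ x : Fin n → ℝ, x ⬝ᵥ ((Bᴴ * B) *ᵥ x) ≤ (1+η)^2 * (x ⬝ᵥ ((Aᴴ * A) *ᵥ x)) := by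
    intro x
    rw [quad_tmul, quad_tmul, ← sq_vecNorm, ← sq_vecNorm]
    calc vecNorm (B *ᵥ x) ^ 2 ≤ ((1+η) * vecNorm (A *ᵥ x))^2 :=
        pow_le_pow_left₀ (vecNorm_nonneg _) (htriag1 x) 2
    _ = (1+η)^2 * vecNorm (A *ᵥ x)^2 := by ring
  have h1mη : 0 < 1 - η := by linarith
  have hQ2 : ∀ x : Fin n → ℝ, x ⬝ᵥ ((Aᴴ * A) *ᵥ x) ≤ ((1-η)⁻¹)^2 * (x ⬝ᵥ ((Bᴴ * B) *ᵥ x)) := by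
    intro x
    rw [quad_tmul, quad_tmul, ← sq_vecNorm, ← sq_vecNorm]
    have hstep : vecNorm (A *ᵥ x) ≤ (1-η)⁻¹ * vecNorm (B *ᵥ x) :=
      (le_inv_mul_iff₀ h1mη).mpr (htriag2 x)
    calc vecNorm (A *ᵥ x) ^ 2 ≤ ((1-η)⁻¹ * vecNorm (B *ᵥ x))^2 :=
        pow_le_pow_left₀ (vecNorm_nonneg _) hstep 2
    _ = ((1-η)⁻¹)^2 * vecNorm (B *ᵥ x)^2 := by ring
  have hgood1 := sortedEig_le_mul (Matrix.isHermitian_conjTranspose_mul_self A)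
    (Matrix.isHermitian_conjTranspose_mul_self B) (by positivity) hQ1 k.rev
  have hgood2 := sortedEig_le_mul (Matrix.isHermitian_conjTranspose_mul_self B)
    (Matrix.isHermitian_conjTranspose_mul_self A) (sq_nonneg _) hQ2 k.rev
  have hupper : sval B k ≤ (1+η) * sval A k := by
    rw [sval_eq, sval_eq]
    calc Real.sqrt (sortedEig (Matrix.isHermitian_conjTranspose_mul_self B) k.rev)
        ≤ Real.sqrt ((1+η)^2 * sortedEig (Matrix.isHermitian_conjTranspose_mul_self A) k.rev) :=
        Real.sqrt_le_sqrt hgood1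
    _ = (1+η) * Real.sqrt (sortedEig (Matrix.isHermitian_conjTranspose_mul_self A) k.rev) := by
        rw [Real.sqrt_mul (sq_nonneg _), Real.sqrt_sq (by linarith)]
  have hlower : (1-η) * sval A k ≤ sval B k := by
    have hs := Real.sqrt_le_sqrt hgood2
    rw [Real.sqrt_mul (sq_nonneg _), Real.sqrt_sq (inv_nonneg.mpr h1mη.le)] at hs
    have hs' : sval A k ≤ (1-η)⁻¹ * sval B k := hs
    calc (1-η) * sval A k ≤ (1-η) * ((1-η)⁻¹ * sval B k) :=
        mul_le_mul_of_nonneg_left hs' (le_of_lt h1mη)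
    _ = sval B k := by
        rw [← mul_assoc, mul_inv_cancel₀ h1mη.ne', one_mul]
  rw [abs_sub_le_iff]
  constructor
  · linarith [hupper]
  · linarith [hlower]
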